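/- arXiv:1909.06241 — 2 statements merged into one kernel-verified Lean document; each statement's English description precedes it below -/
import Mathlib

section
/- ∫_0^∞ ∫_s^∞ e^{-3s} e^{-(t-s)} (2(1−e^{-θ_ℓ s})(r + e^{-θ_ℓ t}(q−r)) − (1−e^{-θ_ℓ s})² r − 2(1−e^{-θ_h s})(r + e^{-θ_h t}(p−r)) + (1−e^{-θ_h s})² r) dt ds = 2θ_ℓ(q−r)/((1+θ_ℓ)(3+θ_ℓ)(3+2θ_ℓ)) − 2θ_h(p−r)/((1+θ_h)(3+θ_h)(3+2θ_h)) + r/(3+2θ_h) − r/(3+2θ_ℓ). -/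
open MeasureTheory Real

lemma exp_int (c : ℝ) {b : ℝ} (hb : 0 < b) :
    ∫ x in Set.Ioi c, Real.exp (-(b * x)) = Real.exp (-(b * c)) / b := by
  have := integral_comp_mul_left_Ioi (fun x => Real.exp (-x)) c hb
  simp only [smul_eq_mul] at this
  rw [this, integral_exp_neg_Ioi, div_eq_inv_mul]

lemma exp_intble (c : ℝ) {b : ℝ} (hb : 0 < b) :
    IntegrableOn (fun x => Real.exp (-(b * x))) (Set.Ioi c) := by
  simpa [neg_mul] using exp_neg_integrableOn_Ioi c hb

lemma tri (s k0 k1 k2 a1 a2 : ℝ) (h1 : 0 < a1) (h2 : 0 < a2) :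
    (∫ t in Set.Ioi s, (k0 * Real.exp (-(1*t)) + k1 * Real.exp (-(a1*t)) + k2 * Real.exp (-(a2*t))))
      = k0 * (Real.exp (-(1*s))/1) + k1 * (Real.exp (-(a1*s))/a1) + k2 * (Real.exp (-(a2*s))/a2) := by
  have j0 : IntegrableOn (fun t => k0 * Real.exp (-(1*t))) (Set.Ioi s) := (exp_intble s one_pos).const_mul _
  have j1 : IntegrableOn (fun t => k1 * Real.exp (-(a1*t))) (Set.Ioi s) := (exp_intble s h1).const_mul _
  have j2 : IntegrableOn (fun t => k2 * Real.exp (-(a2*t))) (Set.Ioi s) := (exp_intble s h2).const_mul _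
  have j01 : IntegrableOn (fun t => k0 * Real.exp (-(1*t)) + k1 * Real.exp (-(a1*t))) (Set.Ioi s) := j0.add j1
  rw [integral_add j01 j2, integral_add j0 j1, MeasureTheory.integral_const_mul, MeasureTheory.integral_const_mul, MeasureTheory.integral_const_mul,
    exp_int s one_pos, exp_int s h1, exp_int s h2]

lemma six (c1 c2 c3 c4 c5 c6 b1 b2 b3 b4 b5 b6 : ℝ)
    (h1 : 0 < b1) (h2 : 0 < b2) (h3 : 0 < b3) (h4 : 0 < b4) (h5 : 0 < b5) (h6 : 0 < b6) :
    (∫ s in Set.Ioi (0:ℝ), (c1 * Real.exp (-(b1*s)) + c2 * Real.exp (-(b2*s))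
      + c3 * Real.exp (-(b3*s)) + c4 * Real.exp (-(b4*s)) + c5 * Real.exp (-(b5*s))
      + c6 * Real.exp (-(b6*s))))
    = c1/b1 + c2/b2 + c3/b3 + c4/b4 + c5/b5 + c6/b6 := by
  have I : ∀ (k a : ℝ), 0 < a → (∫ s in Set.Ioi (0:ℝ), k * Real.exp (-(a*s))) = k/a := by
    intro k a ha
    rw [MeasureTheory.integral_const_mul, exp_int 0 ha]
    simp [div_eq_mul_inv]
  have i1 := (exp_intble 0 h1).const_mul c1
  have i2 := (exp_intble 0 h2).const_mul c2
  have i3 := (exp_intble 0 h3).const_mul c3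
  have i4 := (exp_intble 0 h4).const_mul c4
  have i5 := (exp_intble 0 h5).const_mul c5
  have i6 := (exp_intble 0 h6).const_mul c6
  have i12 : IntegrableOn (fun x => c1 * Real.exp (-(b1*x)) + c2 * Real.exp (-(b2*x))) (Set.Ioi (0:ℝ)) := i1.add i2
  have i13 : IntegrableOn (fun x => c1 * Real.exp (-(b1*x)) + c2 * Real.exp (-(b2*x)) + c3 * Real.exp (-(b3*x))) (Set.Ioi (0:ℝ)) := i12.add i3
  have i14 : IntegrableOn (fun x => c1 * Real.exp (-(b1*x)) + c2 * Real.exp (-(b2*x)) + c3 * Real.exp (-(b3*x)) + c4 * Real.exp (-(b4*x))) (Set.Ioi (0:ℝ)) := i13.add i4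
  have i15 : IntegrableOn (fun x => c1 * Real.exp (-(b1*x)) + c2 * Real.exp (-(b2*x)) + c3 * Real.exp (-(b3*x)) + c4 * Real.exp (-(b4*x)) + c5 * Real.exp (-(b5*x))) (Set.Ioi (0:ℝ)) := i14.add i5
  rw [integral_add i15 i6,
      integral_add i14 i5,
      integral_add i13 i4,
      integral_add i12 i3,
      integral_add i1 i2,
      I c1 b1 h1, I c2 b2 h2, I c3 b3 h3, I c4 b4 h4, I c5 b5 h5, I c6 b6 h6]

/-- fifth (double) integral in the proof of Theorem 3. -/
theorem integral_five (p q r θh θl : ℝ)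
    (hp : p ∈ Set.Icc (0:ℝ) 1) (hq : q ∈ Set.Icc (0:ℝ) 1) (hr : r ∈ Set.Icc (0:ℝ) 1)
    (hθh : 0 ≤ θh) (hθl : 0 ≤ θl) :
    (∫ s in Set.Ioi (0:ℝ), ∫ t in Set.Ioi s,
        Real.exp (-3 * s) * Real.exp (-(t - s)) *
          (2 * (1 - Real.exp (-θl * s)) * (r + Real.exp (-θl * t) * (q - r))
            - (1 - Real.exp (-θl * s)) ^ 2 * r
            - 2 * (1 - Real.exp (-θh * s)) * (r + Real.exp (-θh * t) * (p - r))
            + (1 - Real.exp (-θh * s)) ^ 2 * r))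
      = 2 * θl * (q - r) / ((1 + θl) * (3 + θl) * (3 + 2 * θl))
        - 2 * θh * (p - r) / ((1 + θh) * (3 + θh) * (3 + 2 * θh))
        + r / (3 + 2 * θh) - r / (3 + 2 * θl) := by
  have h1l : (0:ℝ) < 1 + θl := by linarith
  have h1h : (0:ℝ) < 1 + θh := by linarith
  have h3l : (0:ℝ) < 3 + θl := by linarith
  have h3h : (0:ℝ) < 3 + θh := by linarith
  have h32l : (0:ℝ) < 3 + 2*θl := by linarith
  have h32h : (0:ℝ) < 3 + 2*θh := by linarith
  have key : Set.EqOn (fun s => ∫ t in Set.Ioi s,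
        Real.exp (-3 * s) * Real.exp (-(t - s)) *
          (2 * (1 - Real.exp (-θl * s)) * (r + Real.exp (-θl * t) * (q - r))
            - (1 - Real.exp (-θl * s)) ^ 2 * r
            - 2 * (1 - Real.exp (-θh * s)) * (r + Real.exp (-θh * t) * (p - r))
            + (1 - Real.exp (-θh * s)) ^ 2 * r))
      (fun s => r * Real.exp (-((3+2*θh)*s)) + (-r) * Real.exp (-((3+2*θl)*s))
        + (2*(q-r)/(1+θl)) * Real.exp (-((3+θl)*s))
        + (-(2*(q-r)/(1+θl))) * Real.exp (-((3+2*θl)*s))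
        + (-(2*(p-r)/(1+θh))) * Real.exp (-((3+θh)*s))
        + (2*(p-r)/(1+θh)) * Real.exp (-((3+2*θh)*s))) (Set.Ioi (0:ℝ)) := by
    intro s _
    dsimp only
    set L := Real.exp (-θl * s) with hL
    set H := Real.exp (-θh * s) with hH
    have hcong : Set.EqOn (fun t =>
        Real.exp (-3 * s) * Real.exp (-(t - s)) *
          (2 * (1 - Real.exp (-θl * s)) * (r + Real.exp (-θl * t) * (q - r))
            - (1 - Real.exp (-θl * s)) ^ 2 * r
            - 2 * (1 - Real.exp (-θh * s)) * (r + Real.exp (-θh * t) * (p - r))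
            + (1 - Real.exp (-θh * s)) ^ 2 * r))
      (fun t => (Real.exp (-(2*s)) * (2*(1-L)*r - (1-L)^2*r - 2*(1-H)*r + (1-H)^2*r)) * Real.exp (-(1*t))
        + (Real.exp (-(2*s)) * (2*(1-L)*(q-r))) * Real.exp (-((1+θl)*t))
        + (Real.exp (-(2*s)) * (-(2*(1-H)*(p-r)))) * Real.exp (-((1+θh)*t))) (Set.Ioi s) := by
      intro t _
      simp only
      have e0 : Real.exp (-3 * s) * Real.exp (-(t - s)) = Real.exp (-(2*s)) * Real.exp (-(1*t)) := by
        rw [← Real.exp_add, ← Real.exp_add]; congr 1; ring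
      have e1 : Real.exp (-((1+θl)*t)) = Real.exp (-(1*t)) * Real.exp (-θl * t) := by
        rw [← Real.exp_add]; congr 1; ring
      have e2 : Real.exp (-((1+θh)*t)) = Real.exp (-(1*t)) * Real.exp (-θh * t) := by
        rw [← Real.exp_add]; congr 1; ring
      rw [e0, e1, e2, hL, hH]; ring
    rw [setIntegral_congr_fun measurableSet_Ioi hcong,
      tri s _ _ _ (1+θl) (1+θh) h1l h1h]
    have f1 : Real.exp (-((1+θl)*s)) = Real.exp (-(1*s)) * L := by
      rw [hL, ← Real.exp_add]; congr 1; ring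
    have f2 : Real.exp (-((1+θh)*s)) = Real.exp (-(1*s)) * H := by
      rw [hH, ← Real.exp_add]; congr 1; ring
    have g1 : Real.exp (-((3+2*θh)*s)) = Real.exp (-(2*s)) * Real.exp (-(1*s)) * (H * H) := by
      rw [hH, ← Real.exp_add, ← Real.exp_add, ← Real.exp_add]; congr 1; ring
    have g2 : Real.exp (-((3+2*θl)*s)) = Real.exp (-(2*s)) * Real.exp (-(1*s)) * (L * L) := by
      rw [hL, ← Real.exp_add, ← Real.exp_add, ← Real.exp_add]; congr 1; ring
    have g3 : Real.exp (-((3+θl)*s)) = Real.exp (-(2*s)) * Real.exp (-(1*s)) * L := by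
      rw [hL, ← Real.exp_add, ← Real.exp_add]; congr 1; ring
    have g4 : Real.exp (-((3+θh)*s)) = Real.exp (-(2*s)) * Real.exp (-(1*s)) * H := by
      rw [hH, ← Real.exp_add, ← Real.exp_add]; congr 1; ring
    simp only [f1, f2, g1, g2, g3, g4]
    field_simp
    ring
  rw [setIntegral_congr_fun measurableSet_Ioi key,
    six r (-r) (2*(q-r)/(1+θl)) (-(2*(q-r)/(1+θl))) (-(2*(p-r)/(1+θh))) (2*(p-r)/(1+θh))
      (3+2*θh) (3+2*θl) (3+θl) (3+2*θl) (3+θh) (3+2*θh) h32h h32l h3l h32l h3h h32h]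
  field_simp
  ring
end

section
/- If p = q = r in the fixation-probability formula of Theorem 3, then F(x,r,r,r,θ_ℓ,θ_h) = 4x(1−x) r(1−r)(θ_h − θ_ℓ)/((3+2θ_ℓ)(3+2θ_h)); in particular F > 0 if and only if θ_h > θ_ℓ, provided x ∈ (0,1) and r ∈ (0,1). -/
/-- The fixation-probability functional of Theorem 3. -/
noncomputable def fixF (x p q r θl θh : ℝ) : ℝ :=
  x * (1 - x) *
    ((2 * r - 1) * (q - r) * (1 + 2 * θl) / ((1 + θl) * (3 + 2 * θl))
      - (2 * r - 1) * (p - r) * (1 + 2 * θh) / ((1 + θh) * (3 + 2 * θh))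
      + 2 * ((1 - x) * (q - r) ^ 2 / (3 + 2 * θl)
          - x * (p - r) ^ 2 / (3 + 2 * θh)
          + (2 * x - 1) * (p - r) * (q - r) / (3 + θl + θh)
          + r * (1 - r) * (1 / (3 + 2 * θl) - 1 / (3 + 2 * θh))))

/-- the case `p = q = r` of the fixation-probability formula. -/
theorem fixF_mutational_balance (x r θl θh : ℝ)
    (hx : x ∈ Set.Icc (0:ℝ) 1) (hr : r ∈ Set.Icc (0:ℝ) 1)
    (hθl : 0 ≤ θl) (hθh : 0 ≤ θh) :
    fixF x r r r θl θh
        = 4 * x * (1 - x) * r * (1 - r) * (θh - θl) / ((3 + 2 * θl) * (3 + 2 * θh))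
    ∧ (x ∈ Set.Ioo (0:ℝ) 1 → r ∈ Set.Ioo (0:ℝ) 1 →
        (0 < fixF x r r r θl θh ↔ θl < θh)) := by
  have h1 : (0:ℝ) < 3 + 2 * θl := by linarith
  have h2 : (0:ℝ) < 3 + 2 * θh := by linarith
  have h3 : (0:ℝ) < 1 + θl := by linarith
  have h4 : (0:ℝ) < 1 + θh := by linarith
  have h5 : (0:ℝ) < 3 + θl + θh := by linarith
  have heq : fixF x r r r θl θh
      = 4 * x * (1 - x) * r * (1 - r) * (θh - θl) / ((3 + 2 * θl) * (3 + 2 * θh)) := by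
    unfold fixF
    field_simp
    ring
  refine ⟨heq, fun hx' hr' => ?_⟩
  rw [heq]
  have hnum : 0 < 4 * x * (1 - x) * r * (1 - r) := by
    have := hx'.1; have := hx'.2; have := hr'.1; have := hr'.2
    nlinarith [mul_pos (mul_pos hx'.1 (by linarith : (0:ℝ) < 1 - x)) hr'.1]
  have hden : 0 < (3 + 2 * θl) * (3 + 2 * θh) := mul_pos h1 h2
  rw [div_pos_iff]
  constructor
  · rintro (⟨h, _⟩ | ⟨_, h⟩)
    · nlinarith
    · linarith
  · intro h
    exact Or.inl ⟨by nlinarith, hden⟩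
end
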